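/- There exists a Markov chain (X_n) on Ω = [0,∞) with continuous transition kernel x ↦ μ_x, together with f = id, such that sup_x E_x[|f(X₁)−f(x)|] ≤ 1 and E_x[f(X₁)−f(x)] = −1 for all x > 1, yet for some starting point x₀ and every R > 0 there exists n with P_{x₀}(X_n > R) ≥ 1/2. In particular, conditions (D) and (M₀) (negative drift and increments uniformly bounded in L¹) do not imply non-escape of mass. -/

import Mathlib

open MeasureTheory Set Filter
open scoped ENNReal NNReal

/-- The `n`-step distributions of the Markov chain with transition kernel `μk`
started at `x`. -/
noncomputable def iterKernel (μk : ℝ≥0 → Measure ℝ≥0) (x : ℝ≥0) : ℕ → Measure ℝ≥0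
  | 0 => Measure.dirac x
  | n + 1 => (iterKernel μk x n).bind μk

namespace S14
noncomputable section

/-- state: (block index k ≥ 1, step s within block, with s < k) -/
def St : ℕ → ℕ × ℕ
  | 0 => (1, 0)
  | t+1 => if (St t).2 + 1 < (St t).1 then ((St t).1, (St t).2 + 1) else ((St t).1 + 1, 0)

lemma St_succ (t : ℕ) :
    St (t+1) = if (St t).2 + 1 < (St t).1 then ((St t).1, (St t).2 + 1)
      else ((St t).1 + 1, 0) := rfl

def kk (t : ℕ) : ℕ := (St t).1
def ss (t : ℕ) : ℕ := (St t).2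
def DD (t : ℕ) : ℕ := kk t - ss t

lemma kk_pos (t : ℕ) : 1 ≤ kk t := by
  induction t with
  | zero => simp [kk, St]
  | succ n ih => unfold kk; rw [St_succ]; split <;> (simp [kk] at ih ⊢ <;> omega)

lemma ss_lt_kk (t : ℕ) : ss t < kk t := by
  induction t with
  | zero => simp [kk, ss, St]
  | succ n ih => unfold kk ss; rw [St_succ]; split <;> (simp [kk, ss] at ih ⊢ <;> omega)

lemma DD_pos (t : ℕ) : 1 ≤ DD t := by
  have := ss_lt_kk t; unfold DD; omega

lemma kk_le (t : ℕ) : kk t ≤ t + 1 := by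
  induction t with
  | zero => simp [kk, St]
  | succ n ih => unfold kk; rw [St_succ]; split <;> (simp [kk] at ih ⊢ <;> omega)

lemma kk_mono : Monotone kk := by
  apply monotone_nat_of_le_succ
  intro n
  unfold kk; rw [St_succ]; split <;> simp

/-- from a block start, walk within the block -/
lemma St_walk {t k : ℕ} (h : St t = (k, 0)) :
    ∀ s, s < k → St (t + s) = (k, s) := by
  intro s hs
  induction s with
  | zero => simpa using h
  | succ m ih =>
    have hSm := ih (by omega)
    have h2 : St (t + (m+1)) = St ((t + m) + 1) := by ring_nf
    rw [h2, St_succ, hSm]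
    simp only
    rw [if_pos (by omega)]

lemma reach_block : ∀ k, 1 ≤ k → ∃ t, St t = (k, 0) := by
  intro k
  induction k with
  | zero => omega
  | succ K ih =>
    intro _
    rcases Nat.eq_or_lt_of_le (by omega : 1 ≤ K + 1) with h1 | h1
    · exact ⟨0, by simp [St, ← h1]⟩
    · have hK : 1 ≤ K := by omega
      obtain ⟨t, ht⟩ := ih hK
      have hlast := St_walk ht (K - 1) (by omega)
      refine ⟨t + (K - 1) + 1, ?_⟩
      rw [St_succ, hlast]
      simp only
      rw [if_neg (by omega)]

lemma reach (k s : ℕ) (hk : 1 ≤ k) (hs : s < k) : ∃ t, St t = (k, s) := by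
  obtain ⟨t, ht⟩ := reach_block k hk
  exact ⟨t + s, St_walk ht s hs⟩

/-! ### Kernel data functions -/

def xr (t : ℕ) : ℝ := 1/4 + (2:ℝ) ^ (-((t:ℝ)+2))
def qv (t : ℕ) : ℝ := 15 / (16 * kk t)
def hv (t : ℕ) : ℝ := xr (t + DD t) + ((DD t : ℝ) - 1)
def tau (y : ℝ) : ℝ := - Real.logb 2 (y - 1/4)
def ZZ : Set ℝ := Set.range ((↑) : ℤ → ℝ)
def tentf (y : ℝ) : ℝ := max 0 (1 - 4 * Metric.infDist (tau y) ZZ)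
def cqz (n : ℤ) : ℝ := if 2 ≤ n then qv (n-2).toNat else 0
def chz (n : ℤ) : ℝ := if 2 ≤ n then hv (n-2).toNat else 0
def Qr (y : ℝ) : ℝ := cqz (round (tau y)) * tentf y
def Hr (y : ℝ) : ℝ := chz (round (tau y))
def Ur (y : ℝ) : ℝ := max (y - 1) (min (y/2 + 1/8) (9/2 * (1 - y)))

lemma rpow_neg_nat (n : ℕ) : (2:ℝ) ^ (-(n:ℝ)) = ((2^n : ℕ) : ℝ)⁻¹ := by
  rw [Real.rpow_neg (by norm_num), Real.rpow_natCast]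
  push_cast
  ring

lemma rpow_neg_pos (a : ℝ) : 0 < (2:ℝ) ^ a := Real.rpow_pos_of_pos (by norm_num) a

lemma rpow_anti {a b : ℝ} (h : a ≤ b) : (2:ℝ) ^ (-b) ≤ (2:ℝ) ^ (-a) :=
  Real.rpow_le_rpow_left_iff (by norm_num : (1:ℝ) < 2) |>.2 (by linarith)

lemma xr_sub (t : ℕ) : xr t - 1/4 = (2:ℝ) ^ (-((t:ℝ)+2)) := by simp [xr]

lemma xr_gt (t : ℕ) : 1/4 < xr t := by
  have := rpow_neg_pos (-((t:ℝ)+2)); unfold xr; linarith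

lemma xr_le_half (t : ℕ) : xr t ≤ 1/2 := by
  have h : (2:ℝ) ^ (-((t:ℝ)+2)) ≤ (2:ℝ) ^ (-((0:ℝ)+2)) := rpow_anti (by have : (0:ℝ) ≤ (t:ℝ) := Nat.cast_nonneg t; linarith)
  have h2 : (2:ℝ) ^ (-((0:ℝ)+2)) = 1/4 := by
    rw [show -((0:ℝ)+2) = -((2:ℕ):ℝ) by norm_num, rpow_neg_nat]
    norm_num
  unfold xr
  rw [h2] at h
  linarith

lemma xr_step (t : ℕ) : xr (t+1) - 1/4 = (xr t - 1/4)/2 := by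
  rw [xr_sub, xr_sub]
  have : -(((t:ℕ):ℝ)+1+2) = (-((t:ℝ)+2)) + (-1) := by push_cast; ring
  push_cast
  rw [this, Real.rpow_add (by norm_num)]
  rw [show -(1:ℝ) = -((1:ℕ):ℝ) by norm_num, rpow_neg_nat]
  norm_num
  ring

lemma ZZ_mem (m : ℤ) : (m:ℝ) ∈ ZZ := ⟨m, rfl⟩

lemma infDist_int (z : ℝ) : Metric.infDist z ZZ = |z - round z| := by
  apply le_antisymm
  · have := Metric.infDist_le_dist_of_mem (ZZ_mem (round z)) (x := z)
    rwa [Real.dist_eq] at this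
  · by_contra hcon
    push_neg at hcon
    obtain ⟨y, ⟨m, rfl⟩, hd⟩ := (Metric.infDist_lt_iff ⟨_, ZZ_mem 0⟩).1 hcon
    rw [Real.dist_eq] at hd
    exact absurd (round_le z m) (by linarith)

lemma tau_xr (t : ℕ) : tau (xr t) = (t:ℝ) + 2 := by
  unfold tau
  rw [xr_sub, Real.logb_rpow (by norm_num) (by norm_num)]
  ring

lemma round_tau_xr (t : ℕ) : round (tau (xr t)) = (t:ℤ) + 2 := by
  rw [tau_xr]
  rw [show (t:ℝ) + 2 = (((t:ℤ) + 2 : ℤ) : ℝ) by push_cast; ring]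
  exact round_intCast _

lemma tentf_xr (t : ℕ) : tentf (xr t) = 1 := by
  unfold tentf
  rw [tau_xr]
  have : ((t:ℝ) + 2) ∈ ZZ := ⟨(t:ℤ)+2, by push_cast; ring⟩
  rw [Metric.infDist_zero_of_mem this]
  norm_num

lemma Qr_xr (t : ℕ) : Qr (xr t) = qv t := by
  unfold Qr
  rw [round_tau_xr, tentf_xr, cqz, if_pos (by omega)]
  simp

lemma Hr_xr (t : ℕ) : Hr (xr t) = hv t := by
  unfold Hr
  rw [round_tau_xr, chz, if_pos (by omega)]
  simp

lemma Ur_xr (t : ℕ) : Ur (xr t) = xr (t+1) := by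
  have h1 := xr_gt t
  have h2 := xr_le_half t
  have h3 := xr_step t
  unfold Ur
  rw [min_eq_left (by nlinarith), max_eq_right (by nlinarith)]
  linarith [xr_gt (t+1)]

lemma Ur_high {y : ℝ} (h : 1 ≤ y) : Ur y = y - 1 := by
  unfold Ur
  rw [max_eq_left]
  exact le_trans (min_le_right _ _) (by nlinarith)

lemma Ur_nonneg {y : ℝ} (h : 0 ≤ y) : 0 ≤ Ur y := by
  rcases le_or_gt 1 y with h1 | h1
  · rw [Ur_high h1]; linarith
  · exact le_trans (le_min (by linarith) (by linarith)) (le_max_right _ _)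

lemma Ur_dist {y : ℝ} (h : 0 ≤ y) : |Ur y - y| ≤ 1 := by
  rcases le_or_gt 1 y with h1 | h1
  · rw [Ur_high h1]; rw [abs_le]; constructor <;> linarith
  · unfold Ur
    have hmin : (0:ℝ) ≤ min (y/2 + 1/8) (9/2 * (1 - y)) := le_min (by linarith) (by nlinarith)
    rw [max_eq_right (by linarith)]
    rcases min_cases (y/2 + 1/8) (9/2 * (1-y)) with ⟨he,hc⟩|⟨he,hc⟩ <;> rw [he, abs_le] <;>
      constructor <;> nlinarith

lemma kk_real_pos (t : ℕ) : (1:ℝ) ≤ (kk t : ℝ) := by exact_mod_cast kk_pos t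

lemma qv_pos (t : ℕ) : 0 < qv t := by
  have := kk_real_pos t; unfold qv; positivity

lemma qv_le (t : ℕ) : qv t ≤ 15/16 := by
  have h := kk_real_pos t
  unfold qv
  rw [div_le_iff₀ (by linarith)]
  nlinarith

lemma cqz_nonneg (n : ℤ) : 0 ≤ cqz n := by
  unfold cqz; split
  · exact le_of_lt (qv_pos _)
  · exact le_refl 0

lemma cqz_le (n : ℤ) : cqz n ≤ 15/16 := by
  unfold cqz; split
  · exact qv_le _
  · norm_num

lemma tentf_nonneg (y : ℝ) : 0 ≤ tentf y := le_max_left _ _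

lemma tentf_le_one (y : ℝ) : tentf y ≤ 1 := by
  unfold tentf
  have := Metric.infDist_nonneg (x := tau y) (s := ZZ)
  rw [max_le_iff]
  constructor <;> linarith

lemma Qr_nonneg (y : ℝ) : 0 ≤ Qr y := mul_nonneg (cqz_nonneg _) (tentf_nonneg _)

lemma Qr_le (y : ℝ) : Qr y ≤ 15/16 := by
  have h1 := cqz_le (round (tau y))
  have h2 := cqz_nonneg (round (tau y))
  have h3 := tentf_le_one y
  have h4 := tentf_nonneg y
  calc Qr y ≤ cqz (round (tau y)) * 1 := mul_le_mul_of_nonneg_left h3 h2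
  _ ≤ 15/16 := by linarith

lemma rpow_half_lt : (2:ℝ) ^ (-(1/2 : ℝ)) < 3/4 := by
  set a := (2:ℝ) ^ (-(1/2:ℝ)) with ha
  have hpos : 0 < a := rpow_neg_pos _
  have hsq : a^2 = 1/2 := by
    rw [ha, ← Real.rpow_natCast ((2:ℝ)^(-(1/2:ℝ))) 2, ← Real.rpow_mul (by norm_num)]
    rw [show -(1/2:ℝ) * ((2:ℕ):ℝ) = -((1:ℕ):ℝ) by push_cast; norm_num, rpow_neg_nat]
    norm_num
  nlinarith

lemma Qr_high {y : ℝ} (h : 1 < y) : Qr y = 0 := by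
  have htau : tau y < 1/2 := by
    unfold tau
    have h1 : (2:ℝ) ^ (-(1/2:ℝ)) < y - 1/4 := by
      have := rpow_half_lt; linarith
    have := (Real.lt_logb_iff_rpow_lt (by norm_num : (1:ℝ) < 2)
      (by linarith : (0:ℝ) < y - 1/4)).2 h1
    linarith
  have hround : round (tau y) < 2 := by
    have h2 := abs_sub_round (tau y)
    have : (round (tau y) : ℝ) ≤ tau y + 1/2 := by
      rw [abs_le] at h2; linarith
    have : (round (tau y) : ℝ) < 2 := by linarith
    exact_mod_cast this
  unfold Qr cqz
  rw [if_neg (by omega)]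
  ring

/-! ### The kernel -/

def Qn (x : ℝ≥0) : ℝ≥0 := (Qr (x:ℝ)).toNNReal
def Un (x : ℝ≥0) : ℝ≥0 := (Ur (x:ℝ)).toNNReal
def Hn (x : ℝ≥0) : ℝ≥0 := (Hr (x:ℝ)).toNNReal

def μk (x : ℝ≥0) : Measure ℝ≥0 :=
  (((1 - Qn x : ℝ≥0)) : ℝ≥0∞) • Measure.dirac (Un x)
    + ((Qn x : ℝ≥0∞)) • Measure.dirac (Hn x)

lemma Qn_le_one (x : ℝ≥0) : Qn x ≤ 1 := by
  unfold Qn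
  rw [show (1:ℝ≥0) = (1:ℝ).toNNReal by simp]
  exact Real.toNNReal_le_toNNReal (by linarith [Qr_le (x:ℝ)])

lemma measurable_tau : Measurable tau := by
  unfold tau Real.logb
  apply Measurable.neg
  exact (Real.measurable_log.comp ((measurable_id.sub measurable_const))).div_const _

lemma measurable_round : Measurable (fun y : ℝ => round y) := by
  have : (fun y : ℝ => round y) = fun y => ⌊y + 1/2⌋ := by
    funext y; exact round_eq y
  rw [this]
  exact Int.measurable_floor.comp (measurable_id.add_const _)

lemma measurable_Qr : Measurable Qr := by
  unfold Qr tentf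
  apply Measurable.mul
  · exact (Measurable.of_discrete (f := cqz)).comp (measurable_round.comp measurable_tau)
  · apply Measurable.max measurable_const
    apply Measurable.const_sub
    apply Measurable.const_mul
    exact (Metric.continuous_infDist_pt ZZ).measurable.comp measurable_tau

lemma measurable_Hr : Measurable Hr :=
  (Measurable.of_discrete (f := chz)).comp (measurable_round.comp measurable_tau)

lemma continuous_Ur : Continuous Ur := by
  unfold Ur
  fun_prop

lemma measurable_Qn : Measurable Qn :=
  measurable_real_toNNReal.comp (measurable_Qr.comp measurable_coe_nnreal_real)

lemma measurable_Un : Measurable Un :=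
  measurable_real_toNNReal.comp (continuous_Ur.measurable.comp measurable_coe_nnreal_real)

lemma measurable_Hn : Measurable Hn :=
  measurable_real_toNNReal.comp (measurable_Hr.comp measurable_coe_nnreal_real)

lemma measurable_μk : Measurable μk := by
  apply Measure.measurable_of_measurable_coe
  intro s hs
  have h1 : (fun b => μk b s)
      = fun b => ((1 - Qn b : ℝ≥0) : ℝ≥0∞) * s.indicator 1 (Un b)
        + (Qn b : ℝ≥0∞) * s.indicator 1 (Hn b) := by
    funext b
    simp [μk, Measure.add_apply, Measure.smul_apply, Measure.dirac_apply' _ hs, smul_eq_mul]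
    rw [ENNReal.smul_def, smul_eq_mul]
  rw [h1]
  apply Measurable.add
  · apply Measurable.mul
    · exact (measurable_const.sub measurable_Qn).coe_nnreal_ennreal
    · exact (measurable_one.indicator hs).comp measurable_Un
  · apply Measurable.mul
    · exact measurable_Qn.coe_nnreal_ennreal
    · exact (measurable_one.indicator hs).comp measurable_Hn

instance μk_prob (x : ℝ≥0) : IsProbabilityMeasure (μk x) := by
  constructor
  simp only [μk, Measure.add_apply, Measure.smul_apply, smul_eq_mul,
    measure_univ, mul_one]
  rw [← ENNReal.coe_add, tsub_add_cancel_of_le (Qn_le_one x)]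
  rfl

lemma bind_two (a b : ℝ≥0∞) (u v : ℝ≥0) :
    ((a • Measure.dirac u + b • Measure.dirac v).bind μk) = a • μk u + b • μk v := by
  ext s hs
  rw [Measure.bind_apply hs measurable_μk.aemeasurable]
  have hm : Measurable fun a => μk a s := (Measure.measurable_coe hs).comp measurable_μk
  rw [lintegral_add_measure, lintegral_smul_measure, lintegral_smul_measure,
    lintegral_dirac' _ hm, lintegral_dirac' _ hm]
  simp [Measure.add_apply, Measure.smul_apply, smul_eq_mul]

/-! ### The points of the chain -/

def xnn (t : ℕ) : ℝ≥0 := (xr t).toNNReal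
def yr (t : ℕ) : ℝ := xr (t + DD t) + (DD t : ℝ)
def ynn (t : ℕ) : ℝ≥0 := (yr t).toNNReal
def qn (t : ℕ) : ℝ≥0 := (qv t).toNNReal
def an (t : ℕ) : ℝ≥0 := (1 - qn t)^(ss t)

lemma xnn_coe (t : ℕ) : ((xnn t : ℝ≥0) : ℝ) = xr t :=
  Real.coe_toNNReal _ (by linarith [xr_gt t])

lemma DD_real_ge (t : ℕ) : (1:ℝ) ≤ (DD t : ℝ) := by exact_mod_cast DD_pos t

lemma yr_gt (t : ℕ) : 1 < yr t := by
  have := xr_gt (t + DD t)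
  have := DD_real_ge t
  unfold yr
  linarith

lemma ynn_coe (t : ℕ) : ((ynn t : ℝ≥0) : ℝ) = yr t :=
  Real.coe_toNNReal _ (by linarith [yr_gt t])

lemma qn_le_one (t : ℕ) : qn t ≤ 1 := by
  unfold qn
  rw [show (1:ℝ≥0) = (1:ℝ).toNNReal by simp]
  exact Real.toNNReal_le_toNNReal (by linarith [qv_le t])

/-- kernel at a base point -/
lemma μk_base (t : ℕ) :
    μk (xnn t) = ((1 - qn t : ℝ≥0) : ℝ≥0∞) • Measure.dirac (xnn (t+1))
      + ((qn t : ℝ≥0) : ℝ≥0∞) • Measure.dirac ((hv t).toNNReal) := by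
  unfold μk
  rw [show Qn (xnn t) = qn t by unfold Qn qn; rw [xnn_coe, Qr_xr]]
  rw [show Un (xnn t) = xnn (t+1) by unfold Un; rw [xnn_coe, Ur_xr]; rfl]
  rw [show Hn (xnn t) = (hv t).toNNReal by unfold Hn; rw [xnn_coe, Hr_xr]]

/-- kernel at a high point -/
lemma μk_high {x : ℝ≥0} (h : 1 < (x:ℝ)) :
    μk x = Measure.dirac (((x:ℝ) - 1).toNNReal) := by
  unfold μk
  rw [show Qn x = 0 by unfold Qn; rw [Qr_high h]; simp]
  rw [show Un x = ((x:ℝ) - 1).toNNReal by unfold Un; rw [Ur_high (le_of_lt h)]]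
  simp

/-! ### state transition lemmas -/

lemma roll_state {t : ℕ} (h : ss t + 1 < kk t) :
    kk (t+1) = kk t ∧ ss (t+1) = ss t + 1 ∧ DD (t+1) = DD t - 1 := by
  have h' : (St t).2 + 1 < (St t).1 := h
  unfold DD kk ss
  rw [St_succ, if_pos h']
  refine ⟨rfl, rfl, ?_⟩
  show (St t).1 - ((St t).2 + 1) = (St t).1 - (St t).2 - 1
  omega

lemma end_state {t : ℕ} (h : ¬ (ss t + 1 < kk t)) :
    kk (t+1) = kk t + 1 ∧ ss (t+1) = 0 ∧ DD t = 1 := by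
  have hlt := ss_lt_kk t
  have h' : ¬ ((St t).2 + 1 < (St t).1) := h
  unfold DD kk ss at hlt ⊢
  rw [St_succ, if_neg h']
  refine ⟨rfl, rfl, by omega⟩

lemma hv_roll {t : ℕ} (h : ss t + 1 < kk t) : hv t = yr (t+1) := by
  obtain ⟨hk, hs, hD⟩ := roll_state h
  have hD1 : DD t = (DD t - 1) + 1 := by
    have := DD_pos t; omega
  unfold hv yr
  rw [hD]
  have harg : t + DD t = t + 1 + (DD t - 1) := by have := DD_pos t; omega
  rw [harg]
  have : ((DD t : ℝ)) - 1 = ((DD t - 1 : ℕ) : ℝ) := by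
    have := DD_pos t
    push_cast [Nat.cast_sub (by omega : 1 ≤ DD t)]
    ring
  rw [this]

lemma yr_roll {t : ℕ} (h : ss t + 1 < kk t) : yr t - 1 = yr (t+1) := by
  obtain ⟨hk, hs, hD⟩ := roll_state h
  unfold yr
  rw [hD]
  have harg : t + DD t = t + 1 + (DD t - 1) := by have := DD_pos t; omega
  rw [harg]
  have : ((DD t - 1 : ℕ) : ℝ) = (DD t : ℝ) - 1 := by
    push_cast [Nat.cast_sub (by omega : 1 ≤ DD t)]
    ring
  rw [this]
  ring

lemma qv_roll {t : ℕ} (h : ss t + 1 < kk t) : qv (t+1) = qv t := by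
  obtain ⟨hk, _, _⟩ := roll_state h
  unfold qv
  rw [hk]

lemma hv_end {t : ℕ} (h : ¬ (ss t + 1 < kk t)) : hv t = xr (t+1) := by
  obtain ⟨_, _, hD⟩ := end_state h
  unfold hv
  rw [hD]
  norm_num

lemma yr_end {t : ℕ} (h : ¬ (ss t + 1 < kk t)) : yr t = xr (t+1) + 1 := by
  obtain ⟨_, _, hD⟩ := end_state h
  unfold yr
  rw [hD]
  norm_num

/-! ### the n-step distributions -/

def ν (t : ℕ) : Measure ℝ≥0 :=
  ((an t : ℝ≥0) : ℝ≥0∞) • Measure.dirac (xnn t)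
    + ((1 - an t : ℝ≥0) : ℝ≥0∞) • Measure.dirac (ynn t)

lemma an_le_one (t : ℕ) : an t ≤ 1 :=
  pow_le_one' tsub_le_self _

lemma coeff_roll {a q : ℝ≥0} (ha : a ≤ 1) (hq : q ≤ 1) :
    1 - a * (1 - q) = a * q + (1 - a) := by
  have h1 : a * (1 - q) ≤ 1 := le_trans (mul_le_mul ha le_rfl zero_le zero_le_one) (by simpa)
  apply NNReal.coe_injective
  push_cast [NNReal.coe_sub (by simpa using mul_le_one₀ ha zero_le (by simpa using tsub_le_self) : a * (1-q) ≤ 1), NNReal.coe_sub ha, NNReal.coe_sub hq]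
  ring

theorem iter_eq (t : ℕ) : iterKernel μk (xnn 0) t = ν t := by
  induction t with
  | zero =>
    show Measure.dirac (xnn 0) = ν 0
    unfold ν an ss
    simp [St]
  | succ t ih =>
    show (iterKernel μk (xnn 0) t).bind μk = ν (t+1)
    rw [ih]
    unfold ν
    rw [bind_two]
    rw [μk_base t, μk_high (by rw [ynn_coe]; exact yr_gt t)]
    by_cases h : ss t + 1 < kk t
    · -- roll case
      obtain ⟨hk, hs, hD⟩ := roll_state h
      have hq : qn (t+1) = qn t := by unfold qn; rw [qv_roll h]
      have hhv : (hv t).toNNReal = ynn (t+1) := by rw [hv_roll h]; rfl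
      have hyr : (((ynn t : ℝ≥0) : ℝ) - 1).toNNReal = ynn (t+1) := by
        rw [ynn_coe, yr_roll h]; rfl
      rw [hhv, hyr]
      have han : an (t+1) = an t * (1 - qn t) := by
        unfold an
        rw [hq, hs, pow_succ]
      have hco : (1 - an (t+1) : ℝ≥0) = an t * qn t + (1 - an t) := by
        rw [han, coeff_roll (an_le_one t) (qn_le_one t)]
      rw [smul_add, smul_smul, smul_smul, add_assoc, ← add_smul]
      congr 1
      · congr 1
        rw [han, ENNReal.coe_mul]
      · congr 1
        rw [hco, ENNReal.coe_add, ENNReal.coe_mul]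
    · -- end case
      obtain ⟨hk, hs, hD⟩ := end_state h
      have hhv : (hv t).toNNReal = xnn (t+1) := by rw [hv_end h]; rfl
      have hyr : (((ynn t : ℝ≥0) : ℝ) - 1).toNNReal = xnn (t+1) := by
        rw [ynn_coe, yr_end h]; unfold xnn; norm_num
      rw [hhv, hyr]
      have han1 : an (t+1) = 1 := by unfold an; rw [hs, pow_zero]
      rw [han1]
      simp only [tsub_self, ENNReal.coe_zero, zero_smul, add_zero, ENNReal.coe_one, one_smul]
      rw [smul_add, smul_smul, smul_smul, add_assoc, ← add_smul, ← add_smul]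
      have hsum : ((an t : ℝ≥0∞) * ((1 - qn t : ℝ≥0) : ℝ≥0∞)
          + ((an t : ℝ≥0∞) * ((qn t : ℝ≥0):ℝ≥0∞) + ((1 - an t : ℝ≥0) : ℝ≥0∞))) = 1 := by
        have hnn : (an t * (1 - qn t) + (an t * qn t + (1 - an t)) : ℝ≥0) = 1 := by
          have h1 : (an t * (1 - qn t) + (an t * qn t + (1 - an t)) : ℝ≥0)
              = an t * ((1 - qn t) + qn t) + (1 - an t) := by ring
          rw [h1, tsub_add_cancel_of_le (qn_le_one t), mul_one,
            add_comm, tsub_add_cancel_of_le (an_le_one t)]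
        calc ((an t : ℝ≥0∞) * ((1 - qn t : ℝ≥0) : ℝ≥0∞)
            + ((an t : ℝ≥0∞) * ((qn t : ℝ≥0):ℝ≥0∞) + ((1 - an t : ℝ≥0) : ℝ≥0∞)))
            = ((an t * (1 - qn t) + (an t * qn t + (1 - an t)) : ℝ≥0) : ℝ≥0∞) := by push_cast; ring
          _ = 1 := by rw [hnn]; rfl
      rw [hsum, one_smul]

/-! ### drift -/

lemma drift {x : ℝ≥0} (h : 1 < (x:ℝ)) : ∫ y, ((y:ℝ) - (x:ℝ)) ∂ μk x = -1 := by
  rw [μk_high h, integral_dirac]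
  rw [Real.coe_toNNReal _ (by linarith)]
  ring

/-! ### escape of mass -/

lemma an_bound {t D : ℕ} (hD : 1 ≤ D) (hSt : St t = (8*D, 7*D)) : (an t : ℝ) ≤ 1/2 := by
  have hkk : kk t = 8*D := by unfold kk; rw [hSt]
  have hss : ss t = 7*D := by unfold ss; rw [hSt]
  have hD0 : (0:ℝ) < (D:ℝ) := by exact_mod_cast hD
  have hq : qv t = 15/(128*(D:ℝ)) := by
    unfold qv; rw [hkk]; push_cast; ring_nf
  have hql : qv t ≤ 15/16 := qv_le t
  have hqp : 0 < qv t := qv_pos t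
  have hcoe : ((an t : ℝ≥0) : ℝ) = (1 - qv t)^(7*D) := by
    unfold an qn
    rw [hss, NNReal.coe_pow, NNReal.coe_sub (by
      rw [show (1:ℝ≥0) = (1:ℝ).toNNReal by simp]
      exact Real.toNNReal_le_toNNReal (by linarith))]
    rw [Real.coe_toNNReal _ (le_of_lt hqp)]
    norm_num
  have h1 : (1 - qv t) ≤ Real.exp (-qv t) := by
    have := Real.add_one_le_exp (-qv t); linarith
  have h0 : (0:ℝ) ≤ 1 - qv t := by linarith
  have h2 : (1 - qv t)^(7*D) ≤ (Real.exp (-qv t))^(7*D) := pow_le_pow_left₀ h0 h1 _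
  have h3 : (Real.exp (-qv t))^(7*D) = Real.exp (((7*D:ℕ):ℝ) * (-qv t)) := by
    rw [← Real.exp_nat_mul]
  have h4 : ((7*D:ℕ):ℝ) * (-qv t) = -(105/128) := by
    rw [hq]; push_cast; field_simp; ring
  have he : (2:ℝ) ≤ Real.exp (105/128) := by
    have h6 : Real.exp ((105:ℝ)/128) = (Real.exp (35/128))^(3:ℕ) := by
      rw [← Real.exp_nat_mul]; norm_num
    have h7 : (1 + 35/128 : ℝ) ≤ Real.exp (35/128) := by
      have := Real.add_one_le_exp ((35:ℝ)/128); linarith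
    have h8 : ((1:ℝ) + 35/128)^(3:ℕ) ≤ (Real.exp (35/128))^(3:ℕ) :=
      pow_le_pow_left₀ (by norm_num) h7 _
    rw [h6]
    nlinarith [h8]
  have h5 : Real.exp (-(105/128:ℝ)) ≤ 1/2 := by
    rw [Real.exp_neg]
    have hp := Real.exp_pos ((105:ℝ)/128)
    rw [inv_le_comm₀ (by linarith) (by norm_num)]
    linarith [he]
  calc ((an t : ℝ≥0) : ℝ) = (1 - qv t)^(7*D) := hcoe
    _ ≤ (Real.exp (-qv t))^(7*D) := h2
    _ = Real.exp (((7*D:ℕ):ℝ) * (-qv t)) := h3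
    _ = Real.exp (-(105/128)) := by rw [h4]
    _ ≤ 1/2 := h5

theorem escape (R : ℝ) (hR : 0 < R) :
    ∃ n, (1:ℝ≥0∞)/2 ≤ iterKernel μk (xnn 0) n {y : ℝ≥0 | R < (y:ℝ)} := by
  set D := Nat.ceil R with hDdef
  have hD : 1 ≤ D := by
    rw [hDdef]
    exact Nat.one_le_ceil_iff.2 hR
  obtain ⟨t, hSt⟩ := reach (8*D) (7*D) (by omega) (by omega)
  refine ⟨t, ?_⟩
  rw [iter_eq]
  have hDD : DD t = D := by
    unfold DD kk ss; rw [hSt]; show 8*D - 7*D = D; omega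
  have hyR : R < (ynn t : ℝ) := by
    rw [ynn_coe]
    have hx := xr_gt (t + DD t)
    have hceil : R ≤ (D:ℝ) := by exact_mod_cast Nat.le_ceil R
    unfold yr
    rw [hDD]
    rw [hDD] at hx
    linarith
  have hmem : ynn t ∈ {y : ℝ≥0 | R < (y:ℝ)} := hyR
  have hν : ((1 - an t : ℝ≥0) : ℝ≥0∞) ≤ ν t {y : ℝ≥0 | R < (y:ℝ)} := by
    unfold ν
    rw [Measure.add_apply, Measure.smul_apply, Measure.smul_apply,
      Measure.dirac_apply, Measure.dirac_apply]
    rw [Set.indicator_of_mem hmem]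
    simp only [Pi.one_apply, smul_eq_mul, mul_one]
    exact le_add_self
  refine le_trans ?_ hν
  have h2 : an t ≤ 1/2 := by
    have hb := an_bound hD hSt
    have : ((an t : ℝ≥0) : ℝ) ≤ ((1/2 : ℝ≥0) : ℝ) := by
      rw [NNReal.coe_div]; push_cast; linarith
    exact_mod_cast this
  have h3 : (1/2 : ℝ≥0) ≤ 1 - an t := by
    have : an t + 1/2 ≤ 1 := by
      calc an t + 1/2 ≤ 1/2 + 1/2 := by exact add_le_add h2 le_rfl
        _ = 1 := by
          apply NNReal.coe_injective
          push_cast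
          norm_num
    exact le_tsub_of_add_le_left this
  calc (1:ℝ≥0∞)/2 = ((1/2 : ℝ≥0) : ℝ≥0∞) := by norm_num
    _ ≤ ((1 - an t : ℝ≥0) : ℝ≥0∞) := ENNReal.coe_le_coe.2 h3

/-! ### L¹ bound -/

lemma Ur_mid {y : ℝ} (h : y ≤ 7/8) : Ur y = y/2 + 1/8 := by
  unfold Ur
  rw [min_eq_left (by linarith), max_eq_right (by linarith)]

lemma natgrowth (m : ℕ) : 112*(m+1) ≤ 120*2^m := by
  induction m with
  | zero => norm_num
  | succ p ih =>
    have h2 : (1:ℕ) ≤ 2^p := Nat.one_le_two_pow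
    calc 112*(p+1+1) = 112*(p+1) + 112 := by ring
      _ ≤ 120*2^p + 120*2^p := by nlinarith
      _ = 120*2^(p+1) := by ring

lemma seven_eighth_bound {k : ℕ} (hk : 1 ≤ k) :
    (7/8:ℝ) * ((2:ℝ)^(-((k:ℝ)-1))) ≤ 15/(16*(k:ℝ)) := by
  have h := natgrowth (k-1)
  have hk1 : k - 1 + 1 = k := by omega
  rw [hk1] at h
  have hcast : (112:ℝ)*(k:ℝ) ≤ 120*(2:ℝ)^(k-1:ℕ) := by exact_mod_cast h
  have hpow : (2:ℝ)^(-((k:ℝ)-1)) = 1/((2:ℝ)^(k-1:ℕ)) := by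
    rw [show -((k:ℝ)-1) = -(((k-1:ℕ)):ℝ) by push_cast [Nat.cast_sub hk]; ring, rpow_neg_nat]
    push_cast
    ring
  rw [hpow]
  have hkR : (1:ℝ) ≤ (k:ℝ) := by exact_mod_cast hk
  rw [show (7/8:ℝ)*(1/(2:ℝ)^(k-1:ℕ)) = 7/(8*(2:ℝ)^(k-1:ℕ)) by ring]
  rw [div_le_div_iff₀ (by positivity) (by positivity)]
  nlinarith [pow_pos (by norm_num : (0:ℝ)<2) (k-1:ℕ)]

lemma tent_pos_dist {y : ℝ} (h : tentf y ≠ 0) :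
    |tau y - (round (tau y) : ℝ)| < 1/4 := by
  have hd := infDist_int (tau y)
  by_contra hcon
  push_neg at hcon
  apply h
  unfold tentf
  rw [hd]
  exact max_eq_left (by linarith)

lemma cqz_pos_ge {n : ℤ} (h : cqz n ≠ 0) : 2 ≤ n := by
  by_contra hcon
  exact h (by unfold cqz; rw [if_neg hcon])

lemma habs_eq {y : ℝ} (hy : y ≠ 1/4) : |y - 1/4| = (2:ℝ)^(-(tau y)) := by
  rcases lt_or_gt_of_ne hy with hlt | hgt
  · have h1 : tau y = -Real.logb 2 (1/4 - y) := by
      unfold tau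
      rw [show y - 1/4 = -(1/4 - y) by ring]
      rw [Real.logb, Real.logb, Real.log_neg_eq_log]
    rw [h1, neg_neg, Real.rpow_logb (by norm_num) (by norm_num) (by linarith)]
    rw [abs_of_neg (by linarith)]
    ring
  · unfold tau
    rw [neg_neg, Real.rpow_logb (by norm_num) (by norm_num) (by linarith)]
    rw [abs_of_pos (by linarith)]

set_option maxHeartbeats 2000000 in
lemma EDelta_bound (y : ℝ) (hy : 0 ≤ y) :
    (1 - Qr y) * |Ur y - y| + Qr y * |max (Hr y) 0 - y| ≤ 1 := by
  by_cases hQ : Qr y = 0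
  · rw [hQ]
    have := Ur_dist hy
    linarith
  · -- inside a tent
    have hcq : cqz (round (tau y)) ≠ 0 := fun hc => hQ (by unfold Qr; rw [hc]; ring)
    have htp : tentf y ≠ 0 := fun hc => hQ (by unfold Qr; rw [hc]; ring)
    have hn2 : 2 ≤ round (tau y) := cqz_pos_ge hcq
    set n := round (tau y) with hndef
    set t := (n-2).toNat with htdef
    clear_value n t
    have hnt : (n:ℝ) = (t:ℝ) + 2 := by
      have h0 : ((n-2).toNat : ℤ) = n - 2 := Int.toNat_of_nonneg (by omega)
      have h1 : (((n-2).toNat:ℤ):ℝ) = ((n:ℝ) - 2) := by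
        rw [h0]; push_cast; ring
      rw [htdef]
      push_cast at h1 ⊢
      linarith
    have hy14 : y ≠ 1/4 := by
      intro hc
      have : tau y = 0 := by unfold tau; rw [hc]; norm_num
      rw [hndef, this] at hn2
      norm_num at hn2
    have hdist := tent_pos_dist htp
    have habs := habs_eq hy14
    -- bounds on |y - 1/4|
    have hub : |y - 1/4| < (2:ℝ)^(-((t:ℝ)+1)) := by
      rw [habs]
      apply Real.rpow_lt_rpow_left_iff (by norm_num : (1:ℝ) < 2) |>.2
      rw [abs_lt] at hdist
      have h2 := hdist.1
      rw [← hndef, hnt] at h2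
      linarith
    have hlb : (2:ℝ)^(-((t:ℝ)+3)) < |y - 1/4| := by
      rw [habs]
      apply Real.rpow_lt_rpow_left_iff (by norm_num : (1:ℝ) < 2) |>.2
      rw [abs_lt] at hdist
      have h2 := hdist.2
      rw [← hndef, hnt] at h2
      linarith
    set P := (2:ℝ)^(-((t:ℝ))) with hPdef
    have hPpos : 0 < P := rpow_neg_pos _
    have hP1 : (2:ℝ)^(-((t:ℝ)+1)) = P/2 := by
      rw [hPdef, show -((t:ℝ)+1) = (-(t:ℝ)) + (-((1:ℕ):ℝ)) by push_cast; ring,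
        Real.rpow_add (by norm_num), rpow_neg_nat]
      push_cast
      ring
    have hP3 : (2:ℝ)^(-((t:ℝ)+3)) = P/8 := by
      rw [hPdef, show -((t:ℝ)+3) = (-(t:ℝ)) + (-((3:ℕ):ℝ)) by push_cast; ring,
        Real.rpow_add (by norm_num), rpow_neg_nat]
      push_cast
      ring
    rw [hP1] at hub
    -- y is in the "mid" zone
    have hP_le : P ≤ 1 := by
      rw [hPdef, show (1:ℝ) = (2:ℝ)^(-(0:ℝ)) by norm_num]
      exact rpow_anti (by positivity)
    have hymid : y ≤ 7/8 := by
      have : y - 1/4 ≤ |y - 1/4| := le_abs_self _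
      nlinarith
    have hUr : |Ur y - y| = |y - 1/4|/2 := by
      rw [Ur_mid hymid]
      rw [show y/2 + 1/8 - y = -((y - 1/4)/2) by ring, abs_neg, abs_div]
      norm_num
    -- kernel data
    have hQle : Qr y ≤ qv t := by
      have : cqz n = qv t := by unfold cqz; rw [if_pos hn2, ← htdef]
      unfold Qr
      rw [← hndef, this]
      calc qv t * tentf y ≤ qv t * 1 :=
        mul_le_mul_of_nonneg_left (tentf_le_one y) (le_of_lt (qv_pos t))
      _ = qv t := by ring
    have hHr : Hr y = hv t := by
      unfold Hr chz
      rw [← hndef, if_pos hn2, ← htdef]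
    set k := kk t with hkdef
    set D := DD t with hDdef2
    clear_value k D
    have hk1 : 1 ≤ k := by rw [hkdef]; exact kk_pos t
    have hD1 : 1 ≤ D := by rw [hDdef2]; exact DD_pos t
    have hDk : D ≤ k := by rw [hDdef2, hkdef]; unfold DD; omega
    have htk : k ≤ t + 1 := by rw [hkdef]; exact kk_le t
    have hDR : (1:ℝ) ≤ (D:ℝ) := by exact_mod_cast hD1
    have hkR : (1:ℝ) ≤ (k:ℝ) := by exact_mod_cast hk1
    have hDkR : (D:ℝ) ≤ (k:ℝ) := by exact_mod_cast hDk
    -- hv bounds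
    have hxr_sub : xr (t + D) - 1/4 = (2:ℝ)^(-(((t+D:ℕ):ℝ)+2)) := by
      rw [xr_sub (t+D)]
    have hxr_small : xr (t + D) - 1/4 ≤ P/8 := by
      rw [hxr_sub, ← hP3]
      apply rpow_anti
      push_cast
      linarith
    have hxr_pos : 0 < xr (t + D) - 1/4 := by linarith [xr_gt (t+D)]
    have hhv_nonneg : 0 ≤ hv t := by
      unfold hv
      have := xr_gt (t + DD t)
      rw [← hDdef2] at this ⊢
      linarith
    have hmax : max (Hr y) 0 = hv t := by rw [hHr]; exact max_eq_left hhv_nonneg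
    have hHdist : |max (Hr y) 0 - y| ≤ ((D:ℝ) - 1) + (5/8)*P := by
      rw [hmax]
      have hexp : hv t - y = ((D:ℝ) - 1) + (xr (t+D) - 1/4) - (y - 1/4) := by
        unfold hv
        rw [← hDdef2]
        ring
      have hay : |y - 1/4| ≤ P/2 := le_of_lt hub
      have h5 : y - 1/4 ≤ P/2 := le_trans (le_abs_self _) hay
      have h6 : -(P/2) ≤ y - 1/4 := by
        have := neg_abs_le (y - 1/4)
        linarith
      rw [abs_le]
      constructor
      · rw [hexp]
        linarith [hxr_pos, hDR, hPpos]
      · rw [hexp]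
        linarith [hxr_small, hDR]
    -- final assembly
    have hQnn := Qr_nonneg y
    have hq_val : qv t = 15/(16*(k:ℝ)) := by unfold qv; rw [← hkdef]
    have hqv_le : qv t ≤ 15/16 := qv_le t
    have hUb : |Ur y - y| ≤ P/4 := by
      rw [hUr]
      linarith
    have hP_bound : (7/8:ℝ)*P ≤ 15/(16*(k:ℝ)) := by
      have h7 := seven_eighth_bound hk1
      have : P ≤ (2:ℝ)^(-((k:ℝ)-1)) := by
        rw [hPdef]
        apply rpow_anti
        have : (k:ℝ) ≤ (t:ℝ) + 1 := by exact_mod_cast htk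
        linarith
      nlinarith
    have hQD : Qr y * ((D:ℝ)-1) ≤ 15/16 - 15/(16*(k:ℝ)) := by
      have h8 : Qr y * ((D:ℝ)-1) ≤ qv t * ((k:ℝ)-1) := by
        apply mul_le_mul hQle (by linarith) (by linarith) (le_of_lt (qv_pos t))
      have h9 : qv t * ((k:ℝ)-1) = 15/16 - 15/(16*(k:ℝ)) := by
        rw [hq_val]
        field_simp
      linarith
    have hQP : Qr y * ((5/8)*P) ≤ (5/8)*P := by
      nlinarith [Qr_le y, Qr_nonneg y, hPpos]
    calc (1 - Qr y) * |Ur y - y| + Qr y * |max (Hr y) 0 - y|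
        ≤ 1 * |Ur y - y| + Qr y * (((D:ℝ) - 1) + (5/8)*P) := by
          apply add_le_add
          · apply mul_le_mul (by linarith) le_rfl (abs_nonneg _) (by norm_num)
          · exact mul_le_mul_of_nonneg_left hHdist hQnn
      _ ≤ P/4 + (15/16 - 15/(16*(k:ℝ))) + (5/8)*P := by
          rw [mul_add]
          rw [one_mul]
          have := hQP
          linarith [hUb, hQD]
      _ = (15/16 - 15/(16*(k:ℝ))) + (7/8)*P := by ring
      _ ≤ 15/16 := by linarith [hP_bound]
      _ ≤ 1 := by norm_num

lemma lint_bound (x : ℝ≥0) :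
    ∫⁻ y, ENNReal.ofReal |(y:ℝ) - (x:ℝ)| ∂ μk x ≤ 1 := by
  unfold μk
  rw [lintegral_add_measure, lintegral_smul_measure, lintegral_smul_measure,
    lintegral_dirac, lintegral_dirac]
  have hcoe1 : ((Un x : ℝ≥0) : ℝ) = Ur (x:ℝ) := Real.coe_toNNReal _ (Ur_nonneg x.coe_nonneg)
  have hcoe2 : ((Hn x : ℝ≥0) : ℝ) = max (Hr (x:ℝ)) 0 := Real.coe_toNNReal' _
  have hcoe3 : ((1 - Qn x : ℝ≥0) : ℝ) = 1 - Qr (x:ℝ) := by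
    rw [NNReal.coe_sub (Qn_le_one x), NNReal.coe_one]
    unfold Qn
    rw [Real.coe_toNNReal _ (Qr_nonneg _)]
  have hcoe4 : ((Qn x : ℝ≥0) : ℝ) = Qr (x:ℝ) := by
    unfold Qn
    rw [Real.coe_toNNReal _ (Qr_nonneg _)]
  calc (((1 - Qn x : ℝ≥0)) : ℝ≥0∞) * ENNReal.ofReal |((Un x : ℝ≥0):ℝ) - (x:ℝ)|
        + ((Qn x : ℝ≥0∞)) * ENNReal.ofReal |((Hn x : ℝ≥0):ℝ) - (x:ℝ)|
      = ENNReal.ofReal ((1 - Qr (x:ℝ)) * |Ur (x:ℝ) - (x:ℝ)|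
          + Qr (x:ℝ) * |max (Hr (x:ℝ)) 0 - (x:ℝ)|) := by
        rw [ENNReal.ofReal_add (mul_nonneg (by linarith [Qr_le ((x:ℝ≥0):ℝ)]) (abs_nonneg _))
          (mul_nonneg (Qr_nonneg _) (abs_nonneg _))]
        rw [ENNReal.ofReal_mul (by linarith [Qr_le (x:ℝ)]), ENNReal.ofReal_mul (Qr_nonneg _)]
        rw [← hcoe1, ← hcoe2, ← hcoe3, ← hcoe4]
        rw [ENNReal.ofReal_coe_nnreal, ENNReal.ofReal_coe_nnreal]
    _ ≤ 1 := by
        rw [show (1:ℝ≥0∞) = ENNReal.ofReal 1 by simp]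
        apply ENNReal.ofReal_le_ofReal
        exact EDelta_bound (x:ℝ) x.coe_nonneg

/-! ### continuity -/

lemma round_eq_of_abs {z : ℝ} {n : ℤ} (h : |z - n| < 1/2) : round z = n := by
  rw [round_eq, Int.floor_eq_iff]
  rw [abs_lt] at h
  constructor
  · linarith [h.1]
  · push_cast
    linarith [h.2]

lemma tau_quarter : tau (1/4) = 0 := by
  unfold tau
  norm_num

lemma Qr_quarter : Qr (1/4) = 0 := by
  unfold Qr
  rw [tau_quarter]
  rw [show round (0:ℝ) = 0 by simp]
  rw [show cqz 0 = 0 by unfold cqz; rw [if_neg (by omega)]]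
  ring

lemma tau_contAt {y : ℝ} (h : y ≠ 1/4) : ContinuousAt tau y := by
  have h1 : ContinuousAt Real.log (y - 1/4) := Real.continuousAt_log (sub_ne_zero.2 h)
  have h2 : ContinuousAt (fun z : ℝ => z - 1/4) y := by fun_prop
  have h3 : ContinuousAt (fun z : ℝ => Real.log (z - 1/4)) y :=
    ContinuousAt.comp (g := Real.log) (f := fun z : ℝ => z - 1/4) h1 h2
  have heq : tau = fun z => -(Real.log (z - 1/4) / Real.log 2) := rfl
  rw [heq]
  exact (h3.div_const _).neg

lemma tentf_contAt {y : ℝ} (h : y ≠ 1/4) : ContinuousAt tentf y := by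
  have hinf : ContinuousAt (fun z : ℝ => 1 - 4 * Metric.infDist z ZZ) (tau y) := by
    apply ContinuousAt.sub continuousAt_const
    exact (continuous_const.mul (Metric.continuous_infDist_pt ZZ)).continuousAt
  have hc : ContinuousAt (fun z : ℝ => 1 - 4 * Metric.infDist (tau z) ZZ) y :=
    ContinuousAt.comp (g := fun z : ℝ => 1 - 4 * Metric.infDist z ZZ) hinf (tau_contAt h)
  exact continuousAt_const.max hc

lemma round_loc_const {y₀ : ℝ} (h14 : y₀ ≠ 1/4) (hT : tentf y₀ ≠ 0) :
    ∀ᶠ y in nhds y₀, round (tau y) = round (tau y₀) := by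
  have hd := tent_pos_dist hT
  set n := round (tau y₀) with hn
  have hopen : ∀ᶠ y in nhds y₀, |tau y - (n:ℝ)| < 1/2 := by
    have hc := tau_contAt h14
    have hev : ∀ᶠ z in nhds (tau y₀), |z - (n:ℝ)| < 1/2 := by
      have : {z : ℝ | |z - (n:ℝ)| < 1/2} ∈ nhds (tau y₀) := by
        apply IsOpen.mem_nhds
        · have : Continuous fun z : ℝ => |z - (n:ℝ)| := by fun_prop
          exact isOpen_lt this continuous_const
        · show |tau y₀ - (n:ℝ)| < 1/2
          linarith
      exact this
    exact hc.eventually hev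
  filter_upwards [hopen] with y hy
  exact round_eq_of_abs hy

lemma cqz_small {K : ℕ} (hK : 1 ≤ K) :
    ∃ M : ℕ, ∀ n : ℤ, ((M:ℝ) < n) → cqz n ≤ 15/(16*(K:ℝ)) := by
  obtain ⟨tK, htK⟩ := reach_block K hK
  refine ⟨tK + 2, ?_⟩
  intro n hn
  have hn' : (tK:ℤ) + 2 < n := by exact_mod_cast hn
  have hn2 : 2 ≤ n := by omega
  unfold cqz
  rw [if_pos hn2]
  have htt : tK ≤ (n-2).toNat := by omega
  have hkk : K ≤ kk ((n-2).toNat) := by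
    have := kk_mono htt
    have hkt : kk tK = K := by unfold kk; rw [htK]
    omega
  unfold qv
  have h1 : (K:ℝ) ≤ (kk ((n-2).toNat) : ℝ) := by exact_mod_cast hkk
  have h2 : (1:ℝ) ≤ (K:ℝ) := by exact_mod_cast hK
  apply div_le_div_of_nonneg_left (by norm_num) (by linarith) (by linarith)

lemma continuous_Qr : Continuous Qr := by
  rw [continuous_iff_continuousAt]
  intro y₀
  by_cases h14 : y₀ = (1/4 : ℝ)
  · -- the accumulation point
    subst h14
    unfold ContinuousAt
    rw [Qr_quarter, Metric.tendsto_nhds]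
    intro ε hε
    -- choose K with 15/(16 K) < ε
    obtain ⟨K, hKgt⟩ := exists_nat_gt (15/ε)
    have hK1 : 1 ≤ K + 1 := by omega
    obtain ⟨M, hM⟩ := cqz_small hK1
    have hδpos : 0 < (2:ℝ)^(-((M:ℝ)+1)) := rpow_neg_pos _
    rw [Metric.eventually_nhds_iff]
    refine ⟨(2:ℝ)^(-((M:ℝ)+1)), hδpos, ?_⟩
    intro y hyd
    rw [Real.dist_eq] at hyd
    have hbound : Qr y ≤ 15/(16*((K+1:ℕ):ℝ)) := by
      by_cases hy14 : y = 1/4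
      · rw [hy14, Qr_quarter]
        positivity
      · have habs := habs_eq hy14
        have htau_big : (M:ℝ) + 1 < tau y := by
          have h2 : (2:ℝ)^(-(tau y)) < (2:ℝ)^(-((M:ℝ)+1)) := by
            rw [← habs]; exact hyd
          have := (Real.rpow_lt_rpow_left_iff (by norm_num : (1:ℝ) < 2)).1 h2
          linarith
        have hround : (M:ℝ) < (round (tau y) : ℝ) := by
          have := abs_sub_round (tau y)
          rw [abs_le] at this
          linarith [this.1]
        have hroundZ : (M:ℤ) < round (tau y) := by exact_mod_cast hround
        calc Qr y ≤ cqz (round (tau y)) * 1 :=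
              mul_le_mul_of_nonneg_left (tentf_le_one y) (cqz_nonneg _)
          _ = cqz (round (tau y)) := by ring
          _ ≤ 15/(16*((K+1:ℕ):ℝ)) := hM _ (by exact_mod_cast hroundZ)
    have hKpos : (0:ℝ) < (K:ℝ) + 1 := by positivity
    have hεK : 15/(16*((K+1:ℕ):ℝ)) < ε := by
      push_cast
      rw [div_lt_iff₀ (by linarith)]
      rw [div_lt_iff₀ hε] at hKgt
      nlinarith
    rw [Real.dist_eq, sub_zero, abs_of_nonneg (Qr_nonneg y)]
    linarith
  · by_cases hT : tentf y₀ = 0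
    · -- tent vanishes; squeeze
      have hQ0 : Qr y₀ = 0 := by unfold Qr; rw [hT]; ring
      have hb : Tendsto (fun y => (15/16 : ℝ) * tentf y) (nhds y₀)
          (nhds ((15/16 : ℝ) * tentf y₀)) := (tentf_contAt h14).const_mul _
      rw [hT, mul_zero] at hb
      have hsq : Tendsto Qr (nhds y₀) (nhds 0) :=
        squeeze_zero (fun y => Qr_nonneg y)
          (fun y => by
            show Qr y ≤ _
            unfold Qr
            exact mul_le_mul_of_nonneg_right (cqz_le _) (tentf_nonneg _)) hb
      unfold ContinuousAt
      rw [hQ0]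
      exact hsq
    · -- locally a fixed tent
      have hev := round_loc_const h14 hT
      have hQr_eq : (fun y => cqz (round (tau y₀)) * tentf y) =ᶠ[nhds y₀] Qr := by
        filter_upwards [hev] with y hy
        unfold Qr
        rw [hy]
      have hcont : ContinuousAt (fun y => cqz (round (tau y₀)) * tentf y) y₀ :=
        (tentf_contAt h14).const_mul _
      exact hcont.congr hQr_eq

lemma coe_one_sub_Qn (x : ℝ≥0) : ((1 - Qn x : ℝ≥0) : ℝ) = 1 - Qr (x:ℝ) := by
  rw [NNReal.coe_sub (Qn_le_one x), NNReal.coe_one]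
  unfold Qn
  rw [Real.coe_toNNReal _ (Qr_nonneg _)]

lemma coe_Qn (x : ℝ≥0) : ((Qn x : ℝ≥0) : ℝ) = Qr (x:ℝ) := by
  unfold Qn
  rw [Real.coe_toNNReal _ (Qr_nonneg _)]

lemma integral_μk (g : BoundedContinuousFunction ℝ≥0 ℝ) (x : ℝ≥0) :
    ∫ y, g y ∂ μk x = (1 - Qr (x:ℝ)) * g (Un x) + Qr (x:ℝ) * g (Hn x) := by
  unfold μk
  have h1 : Integrable (⇑g) (Measure.dirac (Un x)) := g.integrable _
  have h2 : Integrable (⇑g) (Measure.dirac (Hn x)) := g.integrable _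
  rw [integral_add_measure (h1.smul_measure ENNReal.coe_ne_top)
    (h2.smul_measure ENNReal.coe_ne_top)]
  rw [integral_smul_measure, integral_smul_measure, integral_dirac, integral_dirac]
  rw [ENNReal.coe_toReal, ENNReal.coe_toReal, coe_one_sub_Qn, coe_Qn, smul_eq_mul, smul_eq_mul]

lemma continuous_gUn (g : BoundedContinuousFunction ℝ≥0 ℝ) :
    Continuous fun x : ℝ≥0 => g (Un x) :=
  g.continuous.comp (continuous_real_toNNReal.comp (continuous_Ur.comp NNReal.continuous_coe))

theorem continuity_μk (g : BoundedContinuousFunction ℝ≥0 ℝ) :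
    Continuous fun x : ℝ≥0 => ∫ y, g y ∂ μk x := by
  have hrw : (fun x : ℝ≥0 => ∫ y, g y ∂ μk x)
      = fun x => g (Un x) + Qr (x:ℝ) * (g (Hn x) - g (Un x)) := by
    funext x
    rw [integral_μk]
    ring
  rw [hrw]
  apply Continuous.add (continuous_gUn g)
  have hQcont : Continuous fun x : ℝ≥0 => Qr (x:ℝ) := continuous_Qr.comp NNReal.continuous_coe
  rw [continuous_iff_continuousAt]
  intro x₀
  by_cases hQ : Qr ((x₀:ℝ≥0):ℝ) = 0
  · -- squeeze
    have hbound : ∀ x : ℝ≥0, ‖Qr (x:ℝ) * (g (Hn x) - g (Un x))‖ ≤ Qr (x:ℝ) * (2*‖g‖) := by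
      intro x
      rw [norm_mul, Real.norm_of_nonneg (Qr_nonneg _)]
      apply mul_le_mul_of_nonneg_left ?_ (Qr_nonneg _)
      calc ‖g (Hn x) - g (Un x)‖ ≤ ‖g (Hn x)‖ + ‖g (Un x)‖ := norm_sub_le _ _
        _ ≤ ‖g‖ + ‖g‖ := add_le_add (g.norm_coe_le_norm _) (g.norm_coe_le_norm _)
        _ = 2*‖g‖ := by ring
    have ha : Tendsto (fun x : ℝ≥0 => Qr (x:ℝ) * (2*‖g‖)) (nhds x₀)
        (nhds (Qr ((x₀:ℝ≥0):ℝ) * (2*‖g‖))) := (hQcont.tendsto x₀).mul_const _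
    rw [hQ, zero_mul] at ha
    have hzero : Tendsto (fun x : ℝ≥0 => Qr (x:ℝ) * (g (Hn x) - g (Un x))) (nhds x₀)
        (nhds 0) := squeeze_zero_norm hbound ha
    unfold ContinuousAt
    have hval : (fun x : ℝ≥0 => Qr (x:ℝ) * (g (Hn x) - g (Un x))) x₀ = 0 := by
      show Qr ((x₀:ℝ≥0):ℝ) * (g (Hn x₀) - g (Un x₀)) = 0
      rw [hQ]; ring
    rw [hval]
    exact hzero
  · -- locally constant jump target
    have h14 : ((x₀:ℝ≥0):ℝ) ≠ 1/4 := fun hc => hQ (by rw [hc]; exact Qr_quarter)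
    have hT : tentf ((x₀:ℝ≥0):ℝ) ≠ 0 := fun hc => hQ (by unfold Qr; rw [hc]; ring)
    have hev := round_loc_const h14 hT
    have hcoe_t : Tendsto (fun x : ℝ≥0 => (x:ℝ)) (nhds x₀) (nhds ((x₀:ℝ≥0):ℝ)) :=
      NNReal.continuous_coe.tendsto x₀
    have hev2 : ∀ᶠ x : ℝ≥0 in nhds x₀, round (tau (x:ℝ)) = round (tau ((x₀:ℝ≥0):ℝ)) :=
      hcoe_t.eventually hev
    have heq : (fun x : ℝ≥0 =>
          Qr (x:ℝ) * (g ((chz (round (tau ((x₀:ℝ≥0):ℝ)))).toNNReal) - g (Un x)))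
        =ᶠ[nhds x₀] fun x => Qr (x:ℝ) * (g (Hn x) - g (Un x)) := by
      filter_upwards [hev2] with x hx
      have hHn : Hn x = (chz (round (tau ((x₀:ℝ≥0):ℝ)))).toNNReal := by
        unfold Hn Hr
        rw [hx]
      rw [hHn]
    have hcont : ContinuousAt (fun x : ℝ≥0 =>
        Qr (x:ℝ) * (g ((chz (round (tau ((x₀:ℝ≥0):ℝ)))).toNNReal) - g (Un x))) x₀ := by
      apply ContinuousAt.mul hQcont.continuousAt
      exact continuousAt_const.sub (continuous_gUn g).continuousAt
    exact hcont.congr heq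

end
end S14

/-- Escape of mass under (D) and (M₀): there is a Markov chain on `Ω = [0,∞)` with
(weakly) continuous transition kernel whose increments are uniformly bounded in `L¹`
(by 1) and with drift exactly `−1` above level 1, yet for some starting point `x₀`
the mass escapes: for every `R` some `n`-step distribution gives mass `≥ 1/2`
to `(R, ∞)`. -/
theorem stmt14 :
    ∃ μk : ℝ≥0 → Measure ℝ≥0,
      (∀ x, IsProbabilityMeasure (μk x)) ∧
      (∀ g : BoundedContinuousFunction ℝ≥0 ℝ,
        Continuous fun x => ∫ y, g y ∂ μk x) ∧
      (∀ x, ∫⁻ y, ENNReal.ofReal |(y : ℝ) - (x : ℝ)| ∂ μk x ≤ 1) ∧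
      (∀ x : ℝ≥0, 1 < (x : ℝ) → ∫ y, ((y : ℝ) - (x : ℝ)) ∂ μk x = -1) ∧
      ∃ x₀ : ℝ≥0, ∀ R : ℝ, 0 < R → ∃ n : ℕ,
        (1 : ℝ≥0∞) / 2 ≤ iterKernel μk x₀ n {y | R < (y : ℝ)} := by
  refine ⟨S14.μk, fun x => S14.μk_prob x, S14.continuity_μk, S14.lint_bound,
    fun x hx => S14.drift hx, S14.xnn 0, fun R hR => S14.escape R hR⟩
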